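/- Let A be a nonempty compact subset of ℝⁿ and let k ≥ 1 be an integer. Then c(A(k)) ≤ c(A)/k. -/

import Mathlib

open MeasureTheory Finset
open scoped Pointwise

/-- The Minkowski average `A(k) = (A + ⋯ + A)/k` (`k` Minkowski summands) of a set
`A ⊆ ℝⁿ`: the set of all averages `(a 1 + ⋯ + a k)/k` with each `a i ∈ A`. -/
def minkAvg {n : ℕ} (A : Set (EuclideanSpace ℝ (Fin n))) (k : ℕ) :
    Set (EuclideanSpace ℝ (Fin n)) :=
  {x | ∃ a : Fin k → EuclideanSpace ℝ (Fin n), (∀ i, a i ∈ A) ∧ x = (k : ℝ)⁻¹ • ∑ i, a i}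

/-- **Schneider's non-convexity index**: `c(A) = inf {λ ≥ 0 : A + λ·conv(A) is convex}`,
where the sum is a Minkowski sum. -/
noncomputable def schneiderIndex {n : ℕ} (A : Set (EuclideanSpace ℝ (Fin n))) : ℝ :=
  sInf {l : ℝ | 0 ≤ l ∧ Convex ℝ (A + l • convexHull ℝ A)}

section Aux

variable {n : ℕ} {A : Set (EuclideanSpace ℝ (Fin n))}

/-- If `A + l·conv A` is convex then it equals `(1+l)·conv A`. -/
private lemma eq_smul_hull_of_convex {l : ℝ} (hl : 0 ≤ l)
    (h : Convex ℝ (A + l • convexHull ℝ A)) :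
    A + l • convexHull ℝ A = (1 + l) • convexHull ℝ A := by
  calc A + l • convexHull ℝ A = convexHull ℝ (A + l • convexHull ℝ A) := h.convexHull_eq.symm
    _ = convexHull ℝ A + convexHull ℝ (l • convexHull ℝ A) := convexHull_add _ _
    _ = convexHull ℝ A + l • convexHull ℝ A := by
        rw [convexHull_smul, (convex_convexHull ℝ A).convexHull_eq]
    _ = (1 : ℝ) • convexHull ℝ A + l • convexHull ℝ A := by rw [one_smul]
    _ = (1 + l) • convexHull ℝ A :=
        ((convex_convexHull ℝ A).add_smul zero_le_one hl).symm

/-- An `(m+1)`-fold Minkowski sum of a convex set is a dilate. -/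
private lemma sum_convex_smul {C : Set (EuclideanSpace ℝ (Fin n))} (hC : Convex ℝ C) :
    ∀ m : ℕ, ∑ _i : Fin (m + 1), C = ((m : ℝ) + 1) • C
  | 0 => by simp
  | (m + 1) => by
      have h1 : ∑ _i : Fin (m + 1 + 1), C = C + ∑ _i : Fin (m + 1), C := by
        simp only [Finset.sum_const, Finset.card_univ, Fintype.card_fin]
        rw [succ_nsmul, add_comm]
      rw [h1, sum_convex_smul hC m,
        show (((m + 1 : ℕ) : ℝ)) + 1 = 1 + ((m : ℝ) + 1) by push_cast; ring,
        hC.add_smul zero_le_one (by positivity), one_smul]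

/-- Iterated version of `eq_smul_hull_of_convex`. -/
private lemma sum_add_smul_hull {l : ℝ} (hl : 0 ≤ l)
    (h : A + l • convexHull ℝ A = (1 + l) • convexHull ℝ A) :
    ∀ m : ℕ, (∑ _i : Fin (m + 1), A) + l • convexHull ℝ A
      = ((m : ℝ) + 1 + l) • convexHull ℝ A
  | 0 => by
      have h1 : ∑ _i : Fin 1, A = A := by simp
      rw [h1, h]
      norm_num
  | (m + 1) => by
      have hC := convex_convexHull ℝ A
      have h1 : ∑ _i : Fin (m + 1 + 1), A = A + ∑ _i : Fin (m + 1), A := by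
        simp only [Finset.sum_const, Finset.card_univ, Fintype.card_fin]
        rw [succ_nsmul, add_comm]
      have h2 : ((m : ℝ) + 1 + l) • convexHull ℝ A
          = l • convexHull ℝ A + ((m : ℝ) + 1) • convexHull ℝ A := by
        rw [show ((m : ℝ) + 1 + l) = l + ((m : ℝ) + 1) by ring]
        exact hC.add_smul hl (by positivity)
      rw [h1, add_assoc, sum_add_smul_hull hl h m, h2, ← add_assoc, h,
        ← hC.add_smul (by positivity) (by positivity),
        show ((1 : ℝ) + l + ((m : ℝ) + 1)) = (((m + 1 : ℕ) : ℝ) + 1 + l) by push_cast; ring]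

/-- `minkAvg` as a scaled Minkowski sum. -/
private lemma minkAvg_eq (A : Set (EuclideanSpace ℝ (Fin n))) (k : ℕ) :
    minkAvg A k = (k : ℝ)⁻¹ • ∑ _i : Fin k, A := by
  ext x
  simp only [minkAvg, Set.mem_setOf_eq, Set.mem_smul_set, Set.mem_fintype_sum]
  constructor
  · rintro ⟨a, ha, rfl⟩
    exact ⟨∑ i, a i, ⟨a, ha, rfl⟩, rfl⟩
  · rintro ⟨y, ⟨a, ha, rfl⟩, rfl⟩
    exact ⟨a, ha, rfl⟩

/-- Schneider's theorem: `A + n·conv A` is convex (so `c(A) ≤ n`). -/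
private lemma convex_add_dim_smul_hull (hne : A.Nonempty) :
    Convex ℝ (A + (n : ℝ) • convexHull ℝ A) := by
  classical
  rcases Nat.eq_zero_or_pos n with h0 | hpos
  · subst h0
    have hsub : Subsingleton (EuclideanSpace ℝ (Fin 0)) :=
      ⟨fun a b => by ext i; exact i.elim0⟩
    exact (Set.subsingleton_of_subsingleton).convex
  · have hC := convex_convexHull ℝ A
    have hn0 : ((n : ℝ)) ≠ 0 := by positivity
    suffices hkey : A + (n : ℝ) • convexHull ℝ A = ((1 : ℝ) + n) • convexHull ℝ A by
      rw [hkey]; exact hC.smul _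
    apply Set.Subset.antisymm
    · rintro z hz
      obtain ⟨a, ha, y, hy, rfl⟩ := Set.mem_add.mp hz
      rw [hC.add_smul zero_le_one (by positivity), one_smul]
      exact Set.add_mem_add (subset_convexHull ℝ A ha) hy
    · rintro z ⟨x, hx, rfl⟩
      obtain ⟨ι, hfin, p, w, hpA, hind, hw0, hw1, hxe⟩ :=
        eq_pos_convex_span_of_mem_convexHull hx
      have hpA' : ∀ i, p i ∈ A := fun i => hpA ⟨i, rfl⟩
      have hcard : Fintype.card ι ≤ n + 1 := by
        have h1 := hind.card_le_finrank_succ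
        have h2 : Module.finrank ℝ (vectorSpan ℝ (Set.range p)) ≤ n := by
          have := Submodule.finrank_le (vectorSpan ℝ (Set.range p))
          rwa [finrank_euclideanSpace_fin] at this
        omega
      have hne' : Nonempty ι := by
        by_contra hempty
        rw [not_nonempty_iff] at hempty
        simp at hw1
      have hcard0 : 0 < Fintype.card ι := Fintype.card_pos
      obtain ⟨j, -, hj⟩ : ∃ j ∈ Finset.univ, (1 : ℝ) / (Fintype.card ι) ≤ w j := by
        apply Finset.exists_le_of_sum_le Finset.univ_nonempty
        rw [hw1, Finset.sum_const, Finset.card_univ, nsmul_eq_mul]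
        rw [mul_one_div, div_self (by positivity)]
      have hwj : (1 : ℝ) / (n + 1) ≤ w j := by
        refine le_trans ?_ hj
        apply one_div_le_one_div_of_le (by positivity)
        exact_mod_cast hcard
      have hwj1 : (1 : ℝ) ≤ ((1 : ℝ) + n) * w j := by
        have hp1 : (0 : ℝ) < (n : ℝ) + 1 := by positivity
        rw [div_le_iff₀ hp1] at hwj
        nlinarith
      set c : EuclideanSpace ℝ (Fin n) := (n : ℝ)⁻¹ • (((1 : ℝ) + n) • x - p j) with hc
      have hcC : c ∈ convexHull ℝ A := by
        apply mem_convexHull_of_exists_fintype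
          (fun i => (n : ℝ)⁻¹ * (((1 : ℝ) + n) * w i - if i = j then 1 else 0)) p
        · intro i
          rcases eq_or_ne i j with rfl | hij
          · simp only [if_pos rfl]
            have : (0 : ℝ) ≤ ((1 : ℝ) + n) * w i - 1 := by linarith
            positivity
          · simp only [if_neg hij, sub_zero]
            have := (hw0 i).le
            positivity
        · rw [← Finset.mul_sum, Finset.sum_sub_distrib, ← Finset.mul_sum, hw1, mul_one]
          rw [Finset.sum_ite_eq' Finset.univ j (fun _ => (1 : ℝ)), if_pos (Finset.mem_univ j)]
          field_simp
          ring
        · exact hpA'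
        · have hsum : ∑ i, ((((1 : ℝ) + n) * w i - if i = j then (1 : ℝ) else 0)) • p i
              = ((1 : ℝ) + n) • x - p j := by
            simp only [sub_smul, ite_smul, one_smul, zero_smul, mul_smul]
            rw [Finset.sum_sub_distrib, ← Finset.smul_sum, hxe,
              Finset.sum_ite_eq' Finset.univ j p, if_pos (Finset.mem_univ j)]
          calc ∑ i, ((n : ℝ)⁻¹ * (((1 : ℝ) + n) * w i - if i = j then 1 else 0)) • p i
              = (n : ℝ)⁻¹ • ∑ i, ((((1 : ℝ) + n) * w i - if i = j then (1 : ℝ) else 0)) • p i := by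
                simp only [mul_smul]
                rw [← Finset.smul_sum]
            _ = c := by rw [hsum, hc]
      have hrepr : p j + (n : ℝ) • c = ((1 : ℝ) + n) • x := by
        rw [hc, smul_inv_smul₀ hn0, add_sub_cancel]
      show ((1 : ℝ) + n) • x ∈ A + (n : ℝ) • convexHull ℝ A
      rw [← hrepr]
      exact Set.add_mem_add (hpA' j) (Set.smul_mem_smul_set hcC)

end Aux

/-- **Convergence rate for Schneider's non-convexity index** (Theorem 5.5 of
Fradelizi–Madiman–Marsiglietti–Zvavitch): for a nonempty compact `A ⊆ ℝⁿ` and `k ≥ 1`,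
`c(A(k)) ≤ c(A)/k`. -/
theorem schneiderIndex_minkAvg_le_div {n : ℕ} (A : Set (EuclideanSpace ℝ (Fin n)))
    (hne : A.Nonempty) (hcpt : IsCompact A) (k : ℕ) (hk : 1 ≤ k) :
    schneiderIndex (minkAvg A k) ≤ schneiderIndex A / k := by
  obtain ⟨m, rfl⟩ : ∃ m, k = m + 1 := ⟨k - 1, (Nat.succ_pred_eq_of_pos hk).symm⟩
  have hC := convex_convexHull ℝ A
  have hkpos : (0 : ℝ) < ((m + 1 : ℕ) : ℝ) := by positivity
  have hkne : ((m + 1 : ℕ) : ℝ) ≠ 0 := ne_of_gt hkpos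
  -- the convex hull of the Minkowski average is the convex hull of `A`
  have hhull : convexHull ℝ (minkAvg A (m + 1)) = convexHull ℝ A := by
    rw [minkAvg_eq, convexHull_smul, convexHull_sum, sum_convex_smul hC m, smul_smul,
      show (((m + 1 : ℕ) : ℝ))⁻¹ * ((m : ℝ) + 1) = 1 by push_cast; field_simp, one_smul]
  set SA := {l : ℝ | 0 ≤ l ∧ Convex ℝ (A + l • convexHull ℝ A)} with hSA
  set SK := {l : ℝ | 0 ≤ l ∧
    Convex ℝ (minkAvg A (m + 1) + l • convexHull ℝ (minkAvg A (m + 1)))} with hSK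
  have key : ∀ l ∈ SA, l / ((m + 1 : ℕ) : ℝ) ∈ SK := by
    rintro l ⟨hl0, hconv⟩
    have h1 := eq_smul_hull_of_convex hl0 hconv
    refine ⟨by positivity, ?_⟩
    rw [hhull]
    have heq : minkAvg A (m + 1) + (l / ((m + 1 : ℕ) : ℝ)) • convexHull ℝ A
        = ((((m + 1 : ℕ) : ℝ))⁻¹ * ((m : ℝ) + 1 + l)) • convexHull ℝ A := by
      rw [minkAvg_eq,
        show (l / ((m + 1 : ℕ) : ℝ)) • convexHull ℝ A
          = (((m + 1 : ℕ) : ℝ))⁻¹ • (l • convexHull ℝ A) by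
            rw [smul_smul, div_eq_mul_inv, mul_comm],
        ← smul_add, sum_add_smul_hull hl0 h1 m, smul_smul]
    rw [heq]
    exact hC.smul _
  have hSAne : SA.Nonempty := ⟨(n : ℝ), Nat.cast_nonneg n, convex_add_dim_smul_hull hne⟩
  have hbdd : BddBelow SK := ⟨0, fun l hl => hl.1⟩
  show sInf SK ≤ sInf SA / ((m + 1 : ℕ) : ℝ)
  rw [le_div_iff₀ hkpos]
  apply le_csInf hSAne
  intro b hb
  have hle : sInf SK ≤ b / ((m + 1 : ℕ) : ℝ) := csInf_le hbdd (key b hb)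
  calc sInf SK * ((m + 1 : ℕ) : ℝ) ≤ (b / ((m + 1 : ℕ) : ℝ)) * ((m + 1 : ℕ) : ℝ) :=
        mul_le_mul_of_nonneg_right hle hkpos.le
    _ = b := div_mul_cancel₀ b hkne
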